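/- For every ν ∈ ℂ with ν ∉ ℤ_{−ε}, the modules Π(ε,ν) and π(ε,ν) are isomorphic: there exists a linear automorphism S of V_ε which is diagonal in the standard basis (S v_j = c_j·v_j with c_j ∈ ℂ, c_j ≠ 0, for all j ∈ ℤ_ε) and satisfies S ∘ π(ε,ν)(X) = Π(ε,ν)(X) ∘ S for each X ∈ {H, E, F}. -/

import Mathlib

namespace SL2Deform

/-- The index set `ℤ_ε = {j : ℤ | (-1)^j = ε}`, for a sign `ε ∈ {1, -1}`
(i.e. a unit of `ℤ`). -/
abbrev idx (ε : ℤˣ) : Type := {j : ℤ // (-1 : ℤˣ) ^ j = ε}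

/-- `V ε`: the complex vector space of finitely supported functions on `ℤ_ε`,
with standard basis `{v_j}`. -/
abbrev V (ε : ℤˣ) : Type := idx ε →₀ ℂ

/-- The standard basis vector `v_j` of `V ε`, for `j ∈ ℤ_ε`. -/
noncomputable def bv (ε : ℤˣ) (j : ℤ) (h : (-1 : ℤˣ) ^ j = ε) : V ε :=
  Finsupp.single ⟨j, h⟩ 1

lemma parity_two : (-1 : ℤˣ) ^ (2 : ℤ) = 1 := by decide
lemma parity_neg_two : (-1 : ℤˣ) ^ (-2 : ℤ) = 1 := by decide
lemma parity_zero : (-1 : ℤˣ) ^ (0 : ℤ) = 1 := by decide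

lemma parity_shift {ε : ℤˣ} {j : ℤ} (h : (-1 : ℤˣ) ^ j = ε) {s : ℤ}
    (hs : (-1 : ℤˣ) ^ s = 1) : (-1 : ℤˣ) ^ (j + s) = ε := by
  rw [zpow_add, h, hs, mul_one]

/-- If `m ∈ ℤ_{-ε}` then `m + 1 ∈ ℤ_ε`. -/
lemma parity_succ {ε : ℤˣ} {m : ℤ} (h : (-1 : ℤˣ) ^ m = -ε) :
    (-1 : ℤˣ) ^ (m + 1) = ε := by
  rw [zpow_add, h, zpow_one]
  simp

/-- If `m ∈ ℤ_{-ε}` then `m - 1 ∈ ℤ_ε`. -/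
lemma parity_pred {ε : ℤˣ} {m : ℤ} (h : (-1 : ℤˣ) ^ m = -ε) :
    (-1 : ℤˣ) ^ (m - 1) = ε := by
  rw [sub_eq_add_neg, zpow_add, h, zpow_neg, zpow_one]
  simp

/-- The linear operator on `V ε` sending `v_j` to `c j • v_{j+s}`,
for an even shift `s`. -/
noncomputable def shiftOp (ε : ℤˣ) (s : ℤ) (hs : (-1 : ℤˣ) ^ s = 1) (c : ℤ → ℂ) :
    V ε →ₗ[ℂ] V ε :=
  Finsupp.lsum ℂ fun j =>
    LinearMap.toSpanSingleton ℂ (V ε)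
      (Finsupp.single ⟨j.1 + s, parity_shift j.2 hs⟩ (c j.1))

/-- `H v_j = j • v_j`. -/
noncomputable def Hop (ε : ℤˣ) : V ε →ₗ[ℂ] V ε :=
  shiftOp ε 0 parity_zero fun j => (j : ℂ)

/-- Principal series: `E v_j = ½(ν + j + 1) • v_{j+2}`. -/
noncomputable def Eop (ε : ℤˣ) (ν : ℂ) : V ε →ₗ[ℂ] V ε :=
  shiftOp ε 2 parity_two fun j => (1 / 2 : ℂ) * (ν + j + 1)

/-- Principal series: `F v_j = ½(ν - j + 1) • v_{j-2}`. -/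
noncomputable def Fop (ε : ℤˣ) (ν : ℂ) : V ε →ₗ[ℂ] V ε :=
  shiftOp ε (-2) parity_neg_two fun j => (1 / 2 : ℂ) * (ν - j + 1)

/-- `f_m(ν) = ½ |ν²-m²|^{1/2} (ν+m)/|ν+m|` for `ν ≠ -m`, and `f_m(-m) = 0`. -/
noncomputable def fm (m : ℤ) (ν : ℂ) : ℂ :=
  if ν = -(m : ℂ) then 0
  else (1 / 2 : ℂ) * (Real.sqrt ‖ν ^ 2 - (m : ℂ) ^ 2‖ : ℝ) * (ν + m) /
    (‖ν + (m : ℂ)‖ : ℝ)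

/-- Deformed module: `E v_{m-1} = f_m(ν) • v_{m+1}`, i.e. `E v_j = f_{j+1}(ν) • v_{j+2}`. -/
noncomputable def PEop (ε : ℤˣ) (ν : ℂ) : V ε →ₗ[ℂ] V ε :=
  shiftOp ε 2 parity_two fun j => fm (j + 1) ν

/-- Deformed module: `F v_{m+1} = f_{-m}(ν) • v_{m-1}`, i.e. `F v_j = f_{-(j-1)}(ν) • v_{j-2}`. -/
noncomputable def PFop (ε : ℤˣ) (ν : ℂ) : V ε →ₗ[ℂ] V ε :=
  shiftOp ε (-2) parity_neg_two fun j => fm (1 - j) ν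

/-- The module `π'(ε,ν)`: `E v_{m-1} = ½(ν - |m|) • v_{m+1}`,
i.e. `E v_j = ½(ν - |j+1|) • v_{j+2}`. -/
noncomputable def E'op (ε : ℤˣ) (ν : ℂ) : V ε →ₗ[ℂ] V ε :=
  shiftOp ε 2 parity_two fun j => (1 / 2 : ℂ) * (ν - ((|j + 1| : ℤ) : ℂ))

/-- The module `π'(ε,ν)`: `F v_{m+1} = ½(ν + |m|) • v_{m-1}`,
i.e. `F v_j = ½(ν + |j-1|) • v_{j-2}`. -/
noncomputable def F'op (ε : ℤˣ) (ν : ℂ) : V ε →ₗ[ℂ] V ε :=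
  shiftOp ε (-2) parity_neg_two fun j => (1 / 2 : ℂ) * (ν + ((|j - 1| : ℤ) : ℂ))

/-- `ν ∈ ℤ_{-ε}`: `ν` is an integer with `(-1)^ν = -ε`. -/
def inZminus (ε : ℤˣ) (ν : ℂ) : Prop :=
  ∃ n : ℤ, ν = (n : ℂ) ∧ (-1 : ℤˣ) ^ n = -ε

section ModuleNotions

variable {M : Type*} [AddCommGroup M] [Module ℂ M]
variable {N : Type*} [AddCommGroup N] [Module ℂ N]

/-- `W` is a submodule for the module with operators `A, B, C`: it is invariant
under all three operators. -/
def Invariant (A B C : M →ₗ[ℂ] M) (W : Submodule ℂ M) : Prop :=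
  (∀ x ∈ W, A x ∈ W) ∧ (∀ x ∈ W, B x ∈ W) ∧ (∀ x ∈ W, C x ∈ W)

/-- The module with operators `A, B, C` is irreducible: its only submodules are
`0` and the whole space. -/
def IsIrreducibleRep (A B C : M →ₗ[ℂ] M) : Prop :=
  ∀ W : Submodule ℂ M, Invariant A B C W → W = ⊥ ∨ W = ⊤

/-- `W` is an irreducible submodule: invariant, nonzero, and with no nonzero
proper invariant subspace. -/
def IsIrreducibleSubmodule (A B C : M →ₗ[ℂ] M) (W : Submodule ℂ M) : Prop :=
  Invariant A B C W ∧ W ≠ ⊥ ∧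
    ∀ U : Submodule ℂ M, Invariant A B C U → U ≤ W → U = ⊥ ∨ U = W

/-- The module with operators `A, B, C` is completely reducible: every invariant
subspace has an invariant complement. -/
def CompletelyReducible (A B C : M →ₗ[ℂ] M) : Prop :=
  ∀ W : Submodule ℂ M, Invariant A B C W →
    ∃ U : Submodule ℂ M, Invariant A B C U ∧ IsCompl W U

/-- The two modules (given by operator triples) are isomorphic. -/
def Intertwined (A B C : M →ₗ[ℂ] M) (A' B' C' : N →ₗ[ℂ] N) : Prop :=
  ∃ e : M ≃ₗ[ℂ] N, (∀ x, e (A x) = A' (e x)) ∧ (∀ x, e (B x) = B' (e x)) ∧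
    (∀ x, e (C x) = C' (e x))

/-- An invariant Hermitian form for the module with operators `A, B, C`
(`A` playing the role of `H`, `B` of `E`, `C` of `F`): a sesquilinear form,
conjugate-symmetric, with `⟨Hv,w⟩ = ⟨v,Hw⟩`, `⟨Ev,w⟩ + ⟨v,Fw⟩ = 0`,
`⟨Fv,w⟩ + ⟨v,Ew⟩ = 0`. -/
structure IsInvHermForm (A B C : M →ₗ[ℂ] M) (Φ : M → M → ℂ) : Prop where
  add_left : ∀ u v w, Φ (u + v) w = Φ u w + Φ v w
  smul_left : ∀ (a : ℂ) (v w : M), Φ (a • v) w = a * Φ v w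
  conj_symm : ∀ v w, Φ w v = (starRingEnd ℂ) (Φ v w)
  inv_A : ∀ v w, Φ (A v) w = Φ v (A w)
  inv_BC : ∀ v w, Φ (B v) w + Φ v (C w) = 0
  inv_CB : ∀ v w, Φ (C v) w + Φ v (B w) = 0

end ModuleNotions

/-- `span{v_j : j ≥ n}`. -/
noncomputable def spanGE (ε : ℤˣ) (n : ℤ) : Submodule ℂ (V ε) :=
  Submodule.span ℂ {x : V ε | ∃ j : idx ε, n ≤ j.1 ∧ x = Finsupp.single j 1}

/-- `span{v_j : j ≤ n}`. -/
noncomputable def spanLE (ε : ℤˣ) (n : ℤ) : Submodule ℂ (V ε) :=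
  Submodule.span ℂ {x : V ε | ∃ j : idx ε, j.1 ≤ n ∧ x = Finsupp.single j 1}

/-- `span{v_j : |j| ≤ n}`. -/
noncomputable def spanAbsLE (ε : ℤˣ) (n : ℤ) : Submodule ℂ (V ε) :=
  Submodule.span ℂ {x : V ε | ∃ j : idx ε, |j.1| ≤ n ∧ x = Finsupp.single j 1}

/-- The diagonal operator `S v_j = c j • v_j`. -/
noncomputable def diagMap (ε : ℤˣ) (c : idx ε → ℂ) : V ε →ₗ[ℂ] V ε :=
  Finsupp.lsum ℂ fun j => LinearMap.toSpanSingleton ℂ (V ε) (Finsupp.single j (c j))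

/-! ### Auxiliary lemmas for the proof -/

section AuxScalar

lemma fm_ne_zero' {m : ℤ} {ν : ℂ} (h1 : ν ≠ (m:ℂ)) (h2 : ν ≠ -(m:ℂ)) : fm m ν ≠ 0 := by
  have hp : ν + (m:ℂ) ≠ 0 := by
    intro h; exact h2 (eq_neg_of_add_eq_zero_left h)
  have hm : ν - (m:ℂ) ≠ 0 := sub_ne_zero.mpr h1
  have hsq : ν^2 - (m:ℂ)^2 ≠ 0 := by
    rw [sq_sub_sq]; exact mul_ne_zero hp hm
  rw [fm, if_neg h2]
  apply div_ne_zero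
  · refine mul_ne_zero (mul_ne_zero (by norm_num) ?_) hp
    simp only [ne_eq, Complex.ofReal_eq_zero]
    exact Real.sqrt_ne_zero'.mpr (norm_pos_iff.mpr hsq)
  · simp only [ne_eq, Complex.ofReal_eq_zero]
    exact (norm_pos_iff.mpr hp).ne'

lemma fm_mul_fm (m : ℤ) (ν : ℂ) :
    fm m ν * fm (-m) ν = (1/4 : ℂ) * (ν^2 - (m:ℂ)^2) := by
  by_cases h2 : ν = -(m:ℂ)
  · rw [fm, if_pos h2, zero_mul, h2]; ring
  by_cases h1 : ν = (m:ℂ)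
  · rw [fm, fm, if_neg h2, if_pos (by push_cast; simpa using h1), mul_zero, h1]; ring
  have hp : ν + (m:ℂ) ≠ 0 := fun h => h2 (eq_neg_of_add_eq_zero_left h)
  have hm : ν - (m:ℂ) ≠ 0 := sub_ne_zero.mpr h1
  have hsq : ν^2 - (m:ℂ)^2 ≠ 0 := by rw [sq_sub_sq]; exact mul_ne_zero hp hm
  rw [fm, fm, if_neg h2, if_neg (by push_cast; simpa using h1)]
  push_cast
  have hab : (‖ν + m‖ : ℂ) * (‖ν - m‖ : ℂ)
      = (‖ν^2 - (m:ℂ)^2‖ : ℂ) := by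
    rw [← Complex.ofReal_mul, ← norm_mul]
    congr 2
    ring
  have hs : ((Real.sqrt ‖ν^2 - (m:ℂ)^2‖ : ℝ) : ℂ) *
      ((Real.sqrt ‖ν^2 - (m:ℂ)^2‖ : ℝ) : ℂ)
      = (‖ν^2 - (m:ℂ)^2‖ : ℂ) := by
    rw [← Complex.ofReal_mul, Real.mul_self_sqrt (norm_nonneg _)]
  have habs : (‖ν^2 - (m:ℂ)^2‖ : ℂ) ≠ 0 := by
    simp only [ne_eq, Complex.ofReal_eq_zero]
    exact (norm_pos_iff.mpr hsq).ne'
  rw [div_mul_div_comm]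
  rw [show ν + -(m:ℂ) = ν - m by ring,
    show ν^2 - (-(m:ℂ))^2 = ν^2 - (m:ℂ)^2 by ring] at *
  rw [hab, div_eq_iff habs]
  linear_combination ((1/4 : ℂ) * (ν^2 - (m:ℂ)^2)) * hs

end AuxScalar

section AuxParity

lemma neg_one_zpow_two_mul (k : ℤ) : (-1:ℤˣ)^(2*k) = 1 := by
  rw [zpow_mul, parity_two, one_zpow]

lemma two_dvd_of_zpow_eq_one {n : ℤ} (h : (-1:ℤˣ)^n = 1) : 2 ∣ n := by
  rcases Int.even_or_odd n with he | ho
  · obtain ⟨r, hr⟩ := he; exact ⟨r, by omega⟩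
  · exfalso
    obtain ⟨k, rfl⟩ := ho
    rw [zpow_add, neg_one_zpow_two_mul, one_mul, zpow_one] at h
    exact absurd h (by decide)

lemma units_inv_self (u : ℤˣ) : u⁻¹ = u := inv_eq_of_mul_eq_one_right (Int.units_mul_self u)

lemma parity_succ' {ε : ℤˣ} {j : ℤ} (h : (-1:ℤˣ)^j = ε) : (-1:ℤˣ)^(j+1) = -ε := by
  rw [zpow_add, h, zpow_one, mul_neg_one]

lemma parity_neg {ε : ℤˣ} {j : ℤ} (h : (-1:ℤˣ)^j = ε) : (-1:ℤˣ)^(-j) = ε := by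
  rw [zpow_neg, h, units_inv_self]

end AuxParity

section AuxProd

/-- Ratio of deformed to principal matrix coefficients. -/
noncomputable def rr (ν : ℂ) (j : ℤ) : ℂ := fm (j+1) ν / ((1/2 : ℂ) * (ν + j + 1))

/-- ℤ-indexed "product from j₀": `qq ν j₀ (k+1) = qq ν j₀ k * rr ν (j₀ + 2k)`. -/
noncomputable def qq (ν : ℂ) (j₀ : ℤ) (k : ℤ) : ℂ :=
  if 0 ≤ k then ∏ i ∈ Finset.range k.toNat, rr ν (j₀ + 2*i)
  else (∏ i ∈ Finset.range (-k).toNat, rr ν (j₀ - 2*(i+1)))⁻¹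

variable {ν : ℂ} {j₀ : ℤ}

lemma qq_succ (hr : ∀ m : ℤ, rr ν (j₀ + 2*m) ≠ 0) (k : ℤ) :
    qq ν j₀ (k+1) = qq ν j₀ k * rr ν (j₀ + 2*k) := by
  by_cases hk : 0 ≤ k
  · rw [qq, if_pos (by omega), qq, if_pos hk,
      show (k+1).toNat = k.toNat + 1 by omega, Finset.prod_range_succ,
      Int.toNat_of_nonneg hk]
  · by_cases hk1 : k = -1
    · subst hk1
      rw [show (-1:ℤ)+1 = 0 by norm_num, qq, qq, if_pos le_rfl, if_neg (by norm_num)]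
      norm_num [Finset.prod_range_one]
      rw [show j₀ - 2 = j₀ + 2*(-1) by ring]
      exact (inv_mul_cancel₀ (hr (-1))).symm
    · rw [qq, if_neg (by omega), qq, if_neg hk]
      have h1 : (-k).toNat = (-(k+1)).toNat + 1 := by omega
      rw [h1, Finset.prod_range_succ,
        show j₀ - 2*(((-(k+1)).toNat : ℤ)+1) = j₀ + 2*k by
          rw [Int.toNat_of_nonneg (by omega)]; ring,
        mul_inv, mul_assoc, inv_mul_cancel₀ (hr k), mul_one]

lemma qq_ne_zero (hr : ∀ m : ℤ, rr ν (j₀ + 2*m) ≠ 0) (k : ℤ) : qq ν j₀ k ≠ 0 := by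
  rw [qq]
  split
  · exact Finset.prod_ne_zero_iff.mpr fun i _ => hr i
  · refine inv_ne_zero (Finset.prod_ne_zero_iff.mpr fun i _ => ?_)
    rw [show j₀ - 2*((i:ℤ)+1) = j₀ + 2*(-((i:ℤ)+1)) by ring]
    exact hr _

end AuxProd

section AuxBasis

lemma shiftOp_single (ε : ℤˣ) (s : ℤ) (hs : (-1:ℤˣ)^s = 1) (c : ℤ → ℂ)
    (j : idx ε) (a : ℂ) :
    shiftOp ε s hs c (Finsupp.single j a)
      = Finsupp.single ⟨j.1 + s, parity_shift j.2 hs⟩ (a * c j.1) := by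
  rw [shiftOp, Finsupp.lsum_single, LinearMap.toSpanSingleton_apply, Finsupp.smul_single,
    smul_eq_mul]

lemma diagMap_single (ε : ℤˣ) (c : idx ε → ℂ) (j : idx ε) (a : ℂ) :
    diagMap ε c (Finsupp.single j a) = Finsupp.single j (a * c j) := by
  rw [diagMap, Finsupp.lsum_single, LinearMap.toSpanSingleton_apply, Finsupp.smul_single,
    smul_eq_mul]

lemma single_congr {ε : ℤˣ} {j k : ℤ} (h : j = k) (hj : (-1:ℤˣ)^j = ε)
    (hk : (-1:ℤˣ)^k = ε) (a b : ℂ) (hab : a = b) :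
    (Finsupp.single ⟨j, hj⟩ a : V ε) = Finsupp.single ⟨k, hk⟩ b := by
  subst h; subst hab; rfl

end AuxBasis

/-- For `ν ∉ ℤ_{-ε}`, the modules `Π(ε,ν)` and `π(ε,ν)` are isomorphic
via a linear automorphism `S` of `V ε` which is diagonal in the standard basis
(`S v_j = c_j • v_j`, `c_j ≠ 0`) and satisfies `S ∘ π(X) = Π(X) ∘ S` for
`X ∈ {H, E, F}`. -/

theorem deformed_iso_principal_series (ε : ℤˣ) (ν : ℂ) (hν : ¬ inZminus ε ν) :
    ∃ c : idx ε → ℂ, (∀ j, c j ≠ 0) ∧ Function.Bijective (diagMap ε c) ∧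
      diagMap ε c ∘ₗ Hop ε = Hop ε ∘ₗ diagMap ε c ∧
      diagMap ε c ∘ₗ Eop ε ν = PEop ε ν ∘ₗ diagMap ε c ∧
      diagMap ε c ∘ₗ Fop ε ν = PFop ε ν ∘ₗ diagMap ε c := by
  classical
  obtain ⟨j₀, hj₀⟩ : ∃ j₀ : ℤ, (-1:ℤˣ)^j₀ = ε := by
    rcases Int.units_eq_one_or ε with h | h
    · exact ⟨0, by rw [h]; exact parity_zero⟩
    · exact ⟨1, by rw [h, zpow_one]⟩
  have hne : ∀ n : ℤ, (-1:ℤˣ)^n = -ε → ν ≠ (n:ℂ) := fun n hn h => hν ⟨n, h, hn⟩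
  have hden : ∀ j : ℤ, (-1:ℤˣ)^j = ε → (ν + j + 1) ≠ 0 := by
    intro j hj
    have h1 : ν ≠ ((-(j+1):ℤ):ℂ) := hne _ (parity_neg (parity_succ' hj))
    intro h
    apply h1
    push_cast
    linear_combination h
  have hfm : ∀ m : ℤ, (-1:ℤˣ)^m = -ε → fm m ν ≠ 0 := by
    intro m hm
    refine fm_ne_zero' (hne m hm) ?_
    have h2 := hne (-m) (parity_neg hm)
    push_cast at h2
    exact h2
  have hr : ∀ m : ℤ, rr ν (j₀ + 2*m) ≠ 0 := by
    intro m
    have hjm : (-1:ℤˣ)^(j₀ + 2*m) = ε := by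
      rw [zpow_add, hj₀, neg_one_zpow_two_mul, mul_one]
    simp only [rr]
    exact div_ne_zero (hfm _ (parity_succ' hjm)) (mul_ne_zero (by norm_num) (hden _ hjm))
  set g : ℤ → ℂ := fun j => qq ν j₀ ((j - j₀)/2) with hg
  have hgne : ∀ j : ℤ, g j ≠ 0 := fun j => qq_ne_zero hr _
  have g_rec : ∀ j : ℤ, (-1:ℤˣ)^j = ε → g (j+2) = g j * rr ν j := by
    intro j hj
    have hd : 2 ∣ (j - j₀) := two_dvd_of_zpow_eq_one
      (by rw [zpow_sub, hj, hj₀]; simp)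
    have hk : (j + 2 - j₀)/2 = (j - j₀)/2 + 1 := by omega
    have hk2 : j₀ + 2*((j - j₀)/2) = j := by omega
    simp only [hg]
    rw [hk, qq_succ hr, hk2]
  have E_key : ∀ j : ℤ, (-1:ℤˣ)^j = ε →
      ((1/2:ℂ)*(ν + j + 1)) * g (j+2) = g j * fm (j+1) ν := by
    intro j hj
    rw [g_rec j hj]
    simp only [rr]
    have hd := hden j hj
    field_simp
  have parity_pred' : ∀ j : ℤ, (-1:ℤˣ)^j = ε → (-1:ℤˣ)^(j-1) = -ε := by
    intro j hj
    rw [sub_eq_add_neg, zpow_add, hj, zpow_neg, zpow_one, units_inv_self, mul_neg_one]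
  have F_key : ∀ j : ℤ, (-1:ℤˣ)^j = ε →
      ((1/2:ℂ)*(ν - j + 1)) * g (j + -2) = g j * fm (1 - j) ν := by
    intro j hj
    have hj2 : (-1:ℤˣ)^(j + -2) = ε := parity_shift hj parity_neg_two
    have h1 := E_key (j + -2) hj2
    rw [show j + -2 + 2 = j by ring, show j + -2 + 1 = j - 1 by ring] at h1
    have hprod := fm_mul_fm (j-1) ν
    rw [show -(j-1) = 1 - j by ring] at hprod
    have hX : fm (j-1) ν ≠ 0 := hfm (j-1) (parity_pred' j hj)
    apply mul_right_cancel₀ hX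
    push_cast at h1 hprod ⊢
    linear_combination (-(1/2:ℂ)*(ν - (j:ℂ) + 1)) * h1 + (-(g j)) * hprod
  refine ⟨fun j => g j.1, fun j => hgne j.1, ?_, ?_, ?_, ?_⟩
  · have comp1 : diagMap ε (fun j => (g j.1)⁻¹) ∘ₗ diagMap ε (fun j => g j.1)
        = LinearMap.id := by
      apply Finsupp.lhom_ext
      intro j a
      simp only [LinearMap.comp_apply, diagMap_single, LinearMap.id_apply]
      rw [mul_assoc, mul_inv_cancel₀ (hgne j.1), mul_one]
    have comp2 : diagMap ε (fun j => g j.1) ∘ₗ diagMap ε (fun j => (g j.1)⁻¹)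
        = LinearMap.id := by
      apply Finsupp.lhom_ext
      intro j a
      simp only [LinearMap.comp_apply, diagMap_single, LinearMap.id_apply]
      rw [mul_assoc, inv_mul_cancel₀ (hgne j.1), mul_one]
    exact Function.bijective_iff_has_inverse.mpr ⟨diagMap ε (fun j => (g j.1)⁻¹),
      fun x => by rw [← LinearMap.comp_apply, comp1, LinearMap.id_apply],
      fun x => by rw [← LinearMap.comp_apply, comp2, LinearMap.id_apply]⟩
  · apply Finsupp.lhom_ext
    rintro ⟨j, hj⟩ a
    simp only [LinearMap.comp_apply, Hop, shiftOp_single, diagMap_single]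
    refine single_congr rfl _ _ _ _ ?_
    rw [add_zero]
    ring
  · apply Finsupp.lhom_ext
    rintro ⟨j, hj⟩ a
    simp only [LinearMap.comp_apply, Eop, PEop, shiftOp_single, diagMap_single]
    refine single_congr rfl _ _ _ _ ?_
    linear_combination a * E_key j hj
  · apply Finsupp.lhom_ext
    rintro ⟨j, hj⟩ a
    simp only [LinearMap.comp_apply, Fop, PFop, shiftOp_single, diagMap_single]
    refine single_congr rfl _ _ _ _ ?_
    linear_combination a * F_key j hj

end SL2Deform
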